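/- Define F(x) := E[Z/(1+f^{−1}(x)·Z)] for x ≥ 0, where Z is standard exponential and f^{−1} is the inverse of f(x) = E[log(1+xZ)]/E[Z/(1+xZ)] − x. Then F is continuous, strictly decreasing on [0,∞), with F(0) = 1 and 0 < F(x) < 1 for all x > 0. -/

import Mathlib

open MeasureTheory Set Filter

/-- f(x) = E[log(1+xZ)]/E[Z/(1+xZ)] − x for Z standard exponential. -/
noncomputable def waterfill (x : ℝ) : ℝ :=
  (∫ z in Ioi (0:ℝ), Real.log (1 + x * z) * Real.exp (-z)) /
    (∫ z in Ioi (0:ℝ), (z / (1 + x * z)) * Real.exp (-z)) - x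

namespace FStrictAntiAux

/-- G(t) = E[Z/(1+tZ)]. -/
noncomputable def Gfun (t : ℝ) : ℝ := ∫ z in Ioi (0:ℝ), (z / (1 + t * z)) * Real.exp (-z)

/-- A(t) = E[log(1+tZ)]. -/
noncomputable def Afun (t : ℝ) : ℝ := ∫ z in Ioi (0:ℝ), Real.log (1 + t * z) * Real.exp (-z)

lemma waterfill_eq (t : ℝ) : waterfill t = Afun t / Gfun t - t := rfl

lemma integrable_zexp : IntegrableOn (fun z : ℝ => z * Real.exp (-z)) (Ioi 0) := by
  have h := Real.GammaIntegral_convergent (s := 2) (by norm_num)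
  refine h.congr_fun (fun z hz => ?_) measurableSet_Ioi
  dsimp only
  rw [show (2:ℝ) - 1 = 1 by norm_num, Real.rpow_one, mul_comm]

lemma G_zero' : (∫ z in Ioi (0:ℝ), z * Real.exp (-z)) = 1 := by
  have h := Real.Gamma_eq_integral (s := 2) (by norm_num)
  have h2 : Real.Gamma 2 = 1 := by
    have h1 := Real.Gamma_nat_eq_factorial 1
    norm_num at h1
    simpa using h1
  rw [h2] at h
  rw [show (∫ z in Ioi (0:ℝ), z * Real.exp (-z))
      = ∫ x in Ioi (0:ℝ), Real.exp (-x) * x ^ ((2:ℝ) - 1) from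
    setIntegral_congr_fun measurableSet_Ioi (fun z hz => by
      rw [show (2:ℝ) - 1 = 1 by norm_num, Real.rpow_one, mul_comm]), ← h]

lemma meas_g (t : ℝ) : Measurable (fun z : ℝ => (z / (1 + t * z)) * Real.exp (-z)) := by
  fun_prop

lemma g_nonneg {t z : ℝ} (ht : 0 ≤ t) (hz : 0 < z) :
    0 < (z / (1 + t * z)) * Real.exp (-z) := by
  have h1 : 0 < 1 + t * z := by positivity
  positivity

lemma g_le {t z : ℝ} (ht : 0 ≤ t) (hz : 0 < z) :
    (z / (1 + t * z)) * Real.exp (-z) ≤ z * Real.exp (-z) := by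
  have h1 : (0:ℝ) < 1 + t * z := by positivity
  have : z / (1 + t * z) ≤ z := by
    rw [div_le_iff₀ h1]; nlinarith [mul_nonneg (mul_nonneg ht hz.le) hz.le]
  exact mul_le_mul_of_nonneg_right this (Real.exp_nonneg _)

lemma integrable_g {t : ℝ} (ht : 0 ≤ t) :
    IntegrableOn (fun z : ℝ => (z / (1 + t * z)) * Real.exp (-z)) (Ioi 0) := by
  refine integrable_zexp.mono' (meas_g t).aestronglyMeasurable ?_
  filter_upwards [ae_restrict_mem measurableSet_Ioi] with z hz
  rw [Real.norm_eq_abs, abs_of_nonneg (g_nonneg ht hz).le]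
  exact g_le ht hz

lemma G_pos {t : ℝ} (ht : 0 ≤ t) : 0 < Gfun t := by
  rw [Gfun]
  rw [setIntegral_pos_iff_support_of_nonneg_ae]
  · have : Ioi (0:ℝ) ⊆ Function.support (fun z : ℝ => (z / (1 + t * z)) * Real.exp (-z)) ∩ Ioi 0 :=
      fun z hz => ⟨(g_nonneg ht hz).ne', hz⟩
    calc (0:ENNReal) < volume (Ioi (0:ℝ)) := by simp
      _ ≤ _ := measure_mono this
  · filter_upwards [ae_restrict_mem measurableSet_Ioi] with z hz
    exact (g_nonneg ht hz).le
  · exact integrable_g ht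

lemma G_anti : StrictAntiOn Gfun (Ici 0) := by
  intro s hs t ht hst
  have hdiff : 0 < ∫ z in Ioi (0:ℝ),
      ((z / (1 + s * z)) * Real.exp (-z) - (z / (1 + t * z)) * Real.exp (-z)) := by
    rw [setIntegral_pos_iff_support_of_nonneg_ae]
    · refine lt_of_lt_of_le (by simp : (0:ENNReal) < volume (Ioi (0:ℝ))) (measure_mono ?_)
      intro z hz
      refine ⟨sub_ne_zero.mpr (ne_of_gt ?_), hz⟩
      have hz' : (0:ℝ) < z := hz
      have hs' := hs.out
      have ht' : (0:ℝ) ≤ t := le_trans hs.out hst.le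
      have h1 : (0:ℝ) < 1 + s * z := by positivity
      have h2 : (0:ℝ) < 1 + t * z := by positivity
      refine mul_lt_mul_of_pos_right ?_ (Real.exp_pos (-z))
      rw [div_lt_div_iff₀ h2 h1]
      nlinarith [mul_pos (mul_pos hz' hz') (sub_pos.mpr hst)]
    · filter_upwards [ae_restrict_mem measurableSet_Ioi] with z hz
      have hz' : (0:ℝ) < z := hz
      have hs' := hs.out
      have ht' : (0:ℝ) ≤ t := le_trans hs.out hst.le
      have h1 : (0:ℝ) < 1 + s * z := by positivity
      have h2 : (0:ℝ) < 1 + t * z := by positivity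
      have : z / (1 + t * z) ≤ z / (1 + s * z) := by
        rw [div_le_div_iff₀ h2 h1]
        nlinarith [mul_pos (mul_pos hz' hz') (sub_pos.mpr hst)]
      have := mul_le_mul_of_nonneg_right this (Real.exp_nonneg (-z))
      simpa using sub_nonneg.mpr this
    · exact (integrable_g hs.out).sub (integrable_g (le_trans hs.out hst.le))
  rw [integral_sub (integrable_g hs.out) (integrable_g (le_trans hs.out hst.le))] at hdiff
  simpa [Gfun] using sub_pos.mp hdiff

lemma G_cont : ContinuousOn Gfun (Ici 0) := by
  rw [show Gfun = fun t => ∫ z in Ioi (0:ℝ), (z / (1 + t * z)) * Real.exp (-z) from rfl]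
  refine continuousOn_of_dominated (fun t ht => (meas_g t).aestronglyMeasurable)
    (fun t ht => ?_) integrable_zexp ?_
  · filter_upwards [ae_restrict_mem measurableSet_Ioi] with z hz
    rw [Real.norm_eq_abs, abs_of_nonneg (g_nonneg ht hz).le]
    exact g_le ht hz
  · filter_upwards [ae_restrict_mem measurableSet_Ioi] with z hz
    refine ContinuousOn.mul (ContinuousOn.div continuousOn_const ?_ ?_) continuousOn_const
    · fun_prop
    · intro t ht
      have hz' : (0:ℝ) < z := hz
      have ht' : (0:ℝ) ≤ t := ht
      have : (0:ℝ) < 1 + t * z := by positivity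
      exact this.ne'

lemma G_one : Gfun 0 = 1 := by
  rw [Gfun]
  simp only [zero_mul, add_zero, div_one]
  exact G_zero'

lemma integrable_logexp {t : ℝ} (ht : 0 ≤ t) :
    IntegrableOn (fun z : ℝ => Real.log (1 + t * z) * Real.exp (-z)) (Ioi 0) := by
  have hm : Measurable (fun z : ℝ => Real.log (1 + t * z) * Real.exp (-z)) :=
    (Real.measurable_log.comp (measurable_const.add (measurable_id.const_mul t))).mul
      (Real.measurable_exp.comp measurable_neg)
  have hb : IntegrableOn (fun z : ℝ => t * (z * Real.exp (-z))) (Ioi 0) :=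
    integrable_zexp.const_mul t
  refine hb.mono' hm.aestronglyMeasurable ?_
  filter_upwards [ae_restrict_mem measurableSet_Ioi] with z hz
  have hz' : (0:ℝ) < z := hz
  have h1 : (0:ℝ) < 1 + t * z := by positivity
  have h0 : 0 ≤ Real.log (1 + t * z) :=
    Real.log_nonneg (by nlinarith [mul_nonneg ht hz'.le])
  have hle : Real.log (1 + t * z) ≤ t * z := by
    have := Real.log_le_sub_one_of_pos h1
    linarith
  rw [Real.norm_eq_abs, abs_of_nonneg (by positivity)]
  calc Real.log (1 + t * z) * Real.exp (-z) ≤ t * z * Real.exp (-z) :=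
    mul_le_mul_of_nonneg_right hle (Real.exp_nonneg _)
    _ = t * (z * Real.exp (-z)) := by ring

lemma waterfill_nonneg {t : ℝ} (ht : 0 ≤ t) : 0 ≤ waterfill t := by
  rw [waterfill_eq, sub_nonneg, le_div_iff₀ (G_pos ht)]
  rw [Gfun, Afun, ← integral_const_mul]
  refine setIntegral_mono_on ((integrable_g ht).const_mul t) (integrable_logexp ht)
    measurableSet_Ioi (fun z hz => ?_)
  have hz' : (0:ℝ) < z := hz
  have h1 : (0:ℝ) < 1 + t * z := by positivity
  have key : t * z / (1 + t * z) ≤ Real.log (1 + t * z) := by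
    have := Real.one_sub_inv_le_log_of_pos h1
    have h2 : 1 - (1 + t * z)⁻¹ = t * z / (1 + t * z) := by
      field_simp
      ring
    linarith [h2 ▸ this]
  calc t * (z / (1 + t * z) * Real.exp (-z)) = (t * z / (1 + t * z)) * Real.exp (-z) := by ring
    _ ≤ Real.log (1 + t * z) * Real.exp (-z) := mul_le_mul_of_nonneg_right key (Real.exp_nonneg _)

lemma waterfill_zero : waterfill 0 = 0 := by
  rw [waterfill_eq]
  have : Afun 0 = 0 := by
    rw [Afun]; simp
  rw [this, zero_div, sub_zero]

lemma A_cont {b : ℝ} : ContinuousOn Afun (Icc 0 b) := by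
  rw [show Afun = fun t => ∫ z in Ioi (0:ℝ), Real.log (1 + t * z) * Real.exp (-z) from rfl]
  have hbd : IntegrableOn (fun z : ℝ => b * (z * Real.exp (-z))) (Ioi 0) :=
    integrable_zexp.const_mul b
  refine continuousOn_of_dominated (fun t ht => ?_) (fun t ht => ?_) hbd ?_
  · exact ((Real.measurable_log.comp (measurable_const.add (measurable_id.const_mul t))).mul
      (Real.measurable_exp.comp measurable_neg)).aestronglyMeasurable
  · filter_upwards [ae_restrict_mem measurableSet_Ioi] with z hz
    have hz' : (0:ℝ) < z := hz
    have ht0 : (0:ℝ) ≤ t := ht.1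
    have h1 : (0:ℝ) < 1 + t * z := by positivity
    have hl0 : 0 ≤ Real.log (1 + t * z) :=
      Real.log_nonneg (by nlinarith [mul_nonneg ht0 hz'.le])
    have hl1 : Real.log (1 + t * z) ≤ b * z := by
      have := Real.log_le_sub_one_of_pos h1
      nlinarith [ht.2, hz'.le, mul_le_mul_of_nonneg_right ht.2 hz'.le]
    rw [Real.norm_eq_abs, abs_of_nonneg (by positivity)]
    calc Real.log (1 + t * z) * Real.exp (-z) ≤ (b * z) * Real.exp (-z) :=
      mul_le_mul_of_nonneg_right hl1 (Real.exp_nonneg _)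
    _ = b * (z * Real.exp (-z)) := by ring
  · filter_upwards [ae_restrict_mem measurableSet_Ioi] with z hz
    have hz' : (0:ℝ) < z := hz
    refine ContinuousOn.mul (Real.continuousOn_log.comp (by fun_prop) ?_) continuousOn_const
    intro t ht
    have ht0 : (0:ℝ) ≤ t := ht.1
    have : (0:ℝ) < 1 + t * z := by positivity
    simp only [mem_compl_iff, mem_singleton_iff]
    exact this.ne'

lemma waterfill_cont {b : ℝ} : ContinuousOn waterfill (Icc 0 b) := by
  have : ContinuousOn (fun t => Afun t / Gfun t - t) (Icc 0 b) := by
    refine ContinuousOn.sub (ContinuousOn.div A_cont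
      (G_cont.mono (Icc_subset_Ici_self)) (fun t ht => (G_pos ht.1).ne')) continuousOn_id
  exact this.congr (fun t ht => waterfill_eq t)

end FStrictAntiAux

open FStrictAntiAux in
theorem F_strictAnti (finv : ℝ → ℝ)
    (hmem : ∀ y ∈ Ici (0:ℝ), finv y ∈ Ici (0:ℝ))
    (hleft : ∀ x ∈ Ici (0:ℝ), finv (waterfill x) = x)
    (hright : ∀ y ∈ Ici (0:ℝ), waterfill (finv y) = y) :
    ContinuousOn
      (fun x : ℝ => ∫ z in Ioi (0:ℝ), (z / (1 + finv x * z)) * Real.exp (-z)) (Ici 0) ∧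
    StrictAntiOn
      (fun x : ℝ => ∫ z in Ioi (0:ℝ), (z / (1 + finv x * z)) * Real.exp (-z)) (Ici 0) ∧
    (∫ z in Ioi (0:ℝ), (z / (1 + finv 0 * z)) * Real.exp (-z)) = 1 ∧
    ∀ x : ℝ, 0 < x →
      0 < (∫ z in Ioi (0:ℝ), (z / (1 + finv x * z)) * Real.exp (-z)) ∧
      (∫ z in Ioi (0:ℝ), (z / (1 + finv x * z)) * Real.exp (-z)) < 1 := by
  have hWinj : InjOn waterfill (Ici 0) := fun a ha b hb h => by
    rw [← hleft a ha, ← hleft b hb, h]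
  have hWmono : StrictMonoOn waterfill (Ici 0) := by
    intro x hx y hy hxy
    have hy0 : (0:ℝ) ≤ y := hy
    have h := ContinuousOn.strictMonoOn_of_injOn_Icc hy0
      (by rw [waterfill_zero]; exact waterfill_nonneg hy0)
      waterfill_cont (hWinj.mono (Icc_subset_Ici_self))
    exact h ⟨hx.out, hxy.le⟩ ⟨hy0, le_refl y⟩ hxy
  have hfinv0 : finv 0 = 0 := by
    refine hWinj (hmem 0 self_mem_Ici) self_mem_Ici ?_
    rw [hright 0 self_mem_Ici, waterfill_zero]
  have hfmono : StrictMonoOn finv (Ici 0) := by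
    intro x hx y hy hxy
    refine (hWmono.lt_iff_lt (hmem x hx) (hmem y hy)).mp ?_
    rw [hright x hx, hright y hy]
    exact hxy
  have himg : finv '' (Ici 0) = Ici 0 := by
    apply subset_antisymm
    · rintro _ ⟨y, hy, rfl⟩; exact hmem y hy
    · intro x hx
      exact ⟨waterfill x, waterfill_nonneg hx, hleft x hx⟩
  have hfpos : ∀ x : ℝ, 0 < x → 0 < finv x := by
    intro x hx
    rcases eq_or_lt_of_le (hmem x hx.le).out with h | h
    · exfalso
      have h2 := hright x hx.le
      rw [← h, waterfill_zero] at h2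
      linarith
    · exact h
  have hfcont : ContinuousOn finv (Ici 0) := by
    intro a ha
    rcases eq_or_lt_of_le ha.out with h | ha'
    · subst h
      refine StrictMonoOn.continuousWithinAt_right_of_image_mem_nhdsWithin hfmono
        self_mem_nhdsWithin ?_
      rw [himg, hfinv0]
      exact self_mem_nhdsWithin
    · exact (continuousAt_of_monotoneOn_of_image_mem_nhds hfmono.monotoneOn
        (Ici_mem_nhds ha') (by rw [himg]; exact Ici_mem_nhds (hfpos a ha'))).continuousWithinAt
  refine ⟨?_, ?_, ?_, ?_⟩
  · exact (G_cont.comp hfcont (fun x hx => hmem x hx) :)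
  · intro x hx y hy hxy
    exact G_anti (hmem x hx) (hmem y hy) (hfmono hx hy hxy)
  · show Gfun (finv 0) = 1
    rw [hfinv0]; exact G_one
  · intro x hx
    refine ⟨G_pos (hmem x hx.le), ?_⟩
    calc Gfun (finv x) < Gfun 0 := G_anti self_mem_Ici (hmem x hx.le) (hfpos x hx)
      _ = 1 := G_one
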